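/- Let f : ℝ → ℝ be continuous and let u₂ > 0. Suppose û : ℝ → ℝ is C², satisfies û''(z) + c·û'(z) + f(û(z)) = 0 for all z ∈ ℝ, û(z) → 0 and û'(z) → 0 as z → −∞, û(z) → u₂ and û'(z) → 0 as z → +∞, and û' is square-integrable on ℝ. Then c·∫ℝ (û'(z))² dz = −∫₀^{u₂} f(u) du. In particular, c < 0 if and only if ∫₀^{u₂} f(u) du > 0. -/

import Mathlib

open Filter Topology Set MeasureTheory intervalIntegral

/-- For a traveling front profile `û` connecting `0` to `u₂ > 0` and solving
`û'' + c·û' + f(û) = 0`, with `û, û'` converging at `±∞` and `û'`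
square-integrable, one has `c·∫ℝ (û')² = −∫₀^{u₂} f`; in particular `c < 0`
iff `∫₀^{u₂} f > 0`. -/
theorem stmt7 (f : ℝ → ℝ) (hf : Continuous f) (u₂ c : ℝ) (hu₂ : 0 < u₂)
    (uh : ℝ → ℝ) (hC2 : ContDiff ℝ 2 uh)
    (heq : ∀ z : ℝ, deriv (deriv uh) z + c * deriv uh z + f (uh z) = 0)
    (hlim₁ : Tendsto uh atBot (nhds 0))
    (hlim₂ : Tendsto (deriv uh) atBot (nhds 0))
    (hlim₃ : Tendsto uh atTop (nhds u₂))
    (hlim₄ : Tendsto (deriv uh) atTop (nhds 0))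
    (hL2 : Integrable (fun z => (deriv uh z) ^ 2)) :
    c * (∫ z : ℝ, (deriv uh z) ^ 2) = -∫ u in (0 : ℝ)..u₂, f u ∧
    (c < 0 ↔ 0 < ∫ u in (0 : ℝ)..u₂, f u) := by
  have hC2' : ContDiff ℝ (1 + 1 : ℕ) uh := by exact_mod_cast hC2
  have hduh : ContDiff ℝ 1 (deriv uh) := (contDiff_succ_iff_deriv.mp hC2').2.2
  have huh_diff : Differentiable ℝ uh := hC2.differentiable (by norm_num)
  have hduh_diff : Differentiable ℝ (deriv uh) := hduh.differentiable (by norm_num)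
  have hduh_cont : Continuous (deriv uh) := hduh.continuous
  set F : ℝ → ℝ := fun u => ∫ t in (0 : ℝ)..u, f t with hFdef
  have hFderiv : ∀ u : ℝ, HasDerivAt F (f u) u := fun u =>
    intervalIntegral.integral_hasDerivAt_right (hf.intervalIntegrable _ _)
      (hf.stronglyMeasurableAtFilter _ _) hf.continuousAt
  have hFcont : Continuous F := by
    apply continuous_iff_continuousAt.mpr
    exact fun u => (hFderiv u).continuousAt
  have hF0 : F 0 = 0 := intervalIntegral.integral_same
  set E : ℝ → ℝ := fun z => (deriv uh z) ^ 2 / 2 + F (uh z) with hEdef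
  have hE : ∀ z : ℝ, HasDerivAt E (-(c * (deriv uh z) ^ 2)) z := by
    intro z
    have h1 : HasDerivAt (deriv uh) (deriv (deriv uh) z) z :=
      (hduh_diff z).hasDerivAt
    have h2 : HasDerivAt (fun z => (deriv uh z) ^ 2 / 2)
        ((2 * deriv uh z ^ 1 * deriv (deriv uh) z) / 2) z := (h1.pow 2).div_const 2
    have h3 : HasDerivAt (fun z => F (uh z)) (f (uh z) * deriv uh z) z :=
      (hFderiv (uh z)).comp z (huh_diff z).hasDerivAt
    have h4 : HasDerivAt E (2 * deriv uh z ^ 1 * deriv (deriv uh) z / 2 + f (uh z) * deriv uh z) z :=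
      h2.add h3
    convert h4 using 1
    linear_combination (-(deriv uh z)) * heq z
  have hEint : ∀ a b : ℝ, ∫ z in a..b, -(c * (deriv uh z) ^ 2) = E b - E a := by
    intro a b
    exact intervalIntegral.integral_eq_sub_of_hasDerivAt (fun x _ => hE x)
      ((Continuous.intervalIntegrable (by continuity) a b))
  have hI : Tendsto (fun t : ℝ => ∫ z in (-t)..t, (deriv uh z) ^ 2) atTop
      (nhds (∫ z : ℝ, (deriv uh z) ^ 2)) :=
    intervalIntegral_tendsto_integral hL2 tendsto_neg_atTop_atBot tendsto_id
  have hEbot : Tendsto E atBot (nhds 0) := by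
    have : Tendsto E atBot (nhds ((0 : ℝ) ^ 2 / 2 + F 0)) :=
      ((hlim₂.pow 2).div_const 2).add (hFcont.continuousAt.tendsto.comp hlim₁)
    simpa [hF0] using this
  have hEtop : Tendsto E atTop (nhds (F u₂)) := by
    have : Tendsto E atTop (nhds ((0 : ℝ) ^ 2 / 2 + F u₂)) :=
      ((hlim₄.pow 2).div_const 2).add (hFcont.continuousAt.tendsto.comp hlim₃)
    simpa using this
  -- combine: -(c * I) = F u₂
  have hkey : -(c * ∫ z : ℝ, (deriv uh z) ^ 2) = F u₂ := by
    have h5 : Tendsto (fun t : ℝ => -(c * ∫ z in (-t)..t, (deriv uh z) ^ 2)) atTop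
        (nhds (-(c * ∫ z : ℝ, (deriv uh z) ^ 2))) := (hI.const_mul c).neg
    have h6 : Tendsto (fun t : ℝ => E t - E (-t)) atTop (nhds (F u₂ - 0)) :=
      hEtop.sub (hEbot.comp tendsto_neg_atTop_atBot)
    have h7 : (fun t : ℝ => -(c * ∫ z in (-t)..t, (deriv uh z) ^ 2))
        = fun t : ℝ => E t - E (-t) := by
      funext t
      rw [← hEint (-t) t, intervalIntegral.integral_neg, intervalIntegral.integral_const_mul]
    have h8 := tendsto_nhds_unique (h7 ▸ h5) h6
    linarith
  have hmain : c * (∫ z : ℝ, (deriv uh z) ^ 2) = -F u₂ := by linarith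
  refine ⟨hmain, ?_⟩
  -- positivity of the integral
  have hInonneg : 0 ≤ ∫ z : ℝ, (deriv uh z) ^ 2 :=
    integral_nonneg fun z => sq_nonneg _
  have hIne : (∫ z : ℝ, (deriv uh z) ^ 2) ≠ 0 := by
    intro h0
    have := (integral_eq_zero_iff_of_nonneg (fun z => sq_nonneg _) hL2).mp h0
    have hzero : (fun z => (deriv uh z) ^ 2) = fun _ => (0 : ℝ) :=
      (Continuous.ae_eq_iff_eq volume (hduh_cont.pow 2) continuous_const).mp this
    have hd0 : ∀ z, deriv uh z = 0 := by
      intro z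
      have := congrFun hzero z
      exact pow_eq_zero_iff two_ne_zero |>.mp this
    have hconst : ∀ x y : ℝ, uh x = uh y := fun x y =>
      is_const_of_deriv_eq_zero huh_diff hd0 x y
    have h1 : Tendsto uh atBot (nhds (uh 0)) := by
      have : uh = fun _ => uh 0 := funext fun x => hconst x 0
      rw [this]; exact tendsto_const_nhds
    have h2 : Tendsto uh atTop (nhds (uh 0)) := by
      have : uh = fun _ => uh 0 := funext fun x => hconst x 0
      rw [this]; exact tendsto_const_nhds
    have e1 : uh 0 = 0 := tendsto_nhds_unique h1 hlim₁
    have e2 : uh 0 = u₂ := tendsto_nhds_unique h2 hlim₃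
    linarith
  have hIpos : 0 < ∫ z : ℝ, (deriv uh z) ^ 2 := lt_of_le_of_ne hInonneg (Ne.symm hIne)
  constructor
  · intro hc
    nlinarith
  · intro hFpos
    nlinarith
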